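/- Junta learning lemma (SI Lemma 2 / Fact 3): with χ, Inf, χ' and D as in the context, the normalized Frobenius distance between χ and the induced T-junta process matrix χ' satisfies D(χ, χ') = (1/√2)·‖χ − χ'‖ ≤ √Inf + (√2/2)·Inf. -/

import Mathlib

open Finset ComplexOrder

/-- Frobenius norm of a complex matrix. -/
noncomputable def frobNorm {ι κ : Type*} [Fintype ι] [Fintype κ]
    (M : Matrix ι κ ℂ) : ℝ :=
  Real.sqrt (∑ x, ∑ y, ‖M x y‖ ^ 2)

/-- Influence of a process matrix `χ` (indexed by Pauli strings on `T` and on `T^c`)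
on the complement `T^c`: the diagonal weight of strings acting non-trivially on `T^c`. -/
noncomputable def inflCompl (k m : ℕ)
    (χ : Matrix ((Fin k → Fin 4) × (Fin m → Fin 4)) ((Fin k → Fin 4) × (Fin m → Fin 4)) ℂ) : ℝ :=
  ∑ p ∈ Finset.univ.filter
      (fun p : (Fin k → Fin 4) × (Fin m → Fin 4) => p.2 ≠ 0), (χ p p).re

/-- The `T`-junta process matrix induced by `χ`: sum the diagonal blocks over the
Pauli strings on `T^c` and place the result on the identity string of `T^c`. -/
noncomputable def juntaMatrix (k m : ℕ)
    (χ : Matrix ((Fin k → Fin 4) × (Fin m → Fin 4)) ((Fin k → Fin 4) × (Fin m → Fin 4)) ℂ) :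
    Matrix ((Fin k → Fin 4) × (Fin m → Fin 4)) ((Fin k → Fin 4) × (Fin m → Fin 4)) ℂ :=
  fun p q =>
    if p.2 = 0 ∧ q.2 = 0 then ∑ u : Fin m → Fin 4, χ (p.1, u) (q.1, u) else 0

lemma psd_diag_re_nonneg {n : Type*} [Fintype n] [DecidableEq n] {M : Matrix n n ℂ}
    (h : M.PosSemidef) (p : n) : 0 ≤ (M p p).re := by
  have h2 := h.dotProduct_mulVec_nonneg (Pi.single p 1)
  have h1 : dotProduct (star (Pi.single p 1)) (M.mulVec (Pi.single p 1)) = M p p := by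
    simp [dotProduct, Matrix.mulVec, Pi.single_apply, apply_ite]
  rw [h1] at h2
  exact (Complex.le_def.mp h2).1

lemma psd_entry_sq {n : Type*} [Fintype n] [DecidableEq n] {M : Matrix n n ℂ}
    (h : M.PosSemidef) (p q : n) : ‖M p q‖ ^ 2 ≤ (M p p).re * (M q q).re := by
  obtain ⟨B, hB0⟩ : ∃ B : Matrix n n ℂ, M = star B * B := by
    open scoped MatrixOrder Matrix.Norms.L2Operator in
    exact CStarAlgebra.nonneg_iff_eq_star_mul_self.mp h.nonneg
  have hB : B.conjTranspose * B = M := hB0.symm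
  have hH : ∀ i j, B.conjTranspose i j = (starRingEnd ℂ) (B j i) := by
    intro i j
    rw [Matrix.conjTranspose_apply, Complex.star_def]
  have hdiag : ∀ r : n, (M r r).re = ∑ i, ‖B i r‖ ^ 2 := by
    intro r
    conv_lhs => rw [← hB, Matrix.mul_apply, Complex.re_sum]
    refine Finset.sum_congr rfl fun i _ => ?_
    rw [hH r i]
    simp [Complex.mul_re, Complex.sq_norm, Complex.normSq_apply]
  have hentry : ‖M p q‖ ≤ ∑ i, ‖B i p‖ * ‖B i q‖ := by
    conv_lhs => rw [← hB, Matrix.mul_apply]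
    refine (norm_sum_le _ _).trans (le_of_eq (Finset.sum_congr rfl fun i _ => ?_))
    rw [hH p i, norm_mul, RCLike.norm_conj]
  calc ‖M p q‖ ^ 2 ≤ (∑ i, ‖B i p‖ * ‖B i q‖) ^ 2 := by
        apply pow_le_pow_left₀ (norm_nonneg _) hentry
    _ ≤ (∑ i, ‖B i p‖ ^ 2) * ∑ i, ‖B i q‖ ^ 2 :=
        Finset.sum_mul_sq_le_sq_mul_sq _ _ _
    _ = (M p p).re * (M q q).re := by rw [hdiag, hdiag]

theorem junta_learning_lemma (k m : ℕ)
    (χ : Matrix ((Fin k → Fin 4) × (Fin m → Fin 4)) ((Fin k → Fin 4) × (Fin m → Fin 4)) ℂ)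
    (hpsd : χ.PosSemidef) (htr : χ.trace = 1) :
    (1 / Real.sqrt 2) * frobNorm (χ - juntaMatrix k m χ)
      ≤ Real.sqrt (inflCompl k m χ) + (Real.sqrt 2 / 2) * inflCompl k m χ := by
  classical
  set d : ((Fin k → Fin 4) × (Fin m → Fin 4)) → ℝ := fun p => (χ p p).re with hd
  have hd0 : ∀ p, 0 ≤ d p := fun p => psd_diag_re_nonneg hpsd p
  have htr' : ∑ p, d p = 1 := by
    have := congrArg Complex.re htr
    simpa [Matrix.trace, Matrix.diag, Complex.re_sum, hd] using this
  set gI : (Fin k → Fin 4) → ℝ := fun a => ∑ u ∈ Finset.univ.erase (0 : Fin m → Fin 4), d (a, u)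
    with hgI
  have hgI0 : ∀ a, 0 ≤ gI a := fun a => Finset.sum_nonneg fun u _ => hd0 _
  set e : ((Fin k → Fin 4) × (Fin m → Fin 4)) → ℝ :=
    fun p => if p.2 = 0 then gI p.1 else 0 with he
  set f : ((Fin k → Fin 4) × (Fin m → Fin 4)) → ℝ :=
    fun p => if p.2 = 0 then d p else 0 with hf
  set I := inflCompl k m χ with hI
  -- I as a double sum
  have hIgI : I = ∑ a, gI a := by
    rw [hI, inflCompl, Finset.sum_filter, Fintype.sum_prod_type]
    refine Finset.sum_congr rfl fun a _ => ?_
    rw [hgI]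
    rw [← Finset.sum_filter]
    congr 1
    exact Finset.filter_ne' _ _
  have hSe : ∑ p, e p = I := by
    rw [Fintype.sum_prod_type, hIgI]
    refine Finset.sum_congr rfl fun a _ => ?_
    simp [he]
  have hSf : ∑ p, f p = 1 - I := by
    have h1 : ∑ p, f p = ∑ a, d (a, 0) := by
      rw [Fintype.sum_prod_type]
      refine Finset.sum_congr rfl fun a _ => ?_
      simp [hf]
    have h2 : ∑ a, (d (a, 0) + gI a) = 1 := by
      rw [← htr', Fintype.sum_prod_type]
      refine Finset.sum_congr rfl fun a _ => ?_
      show d (a, 0) + ∑ u ∈ Finset.univ.erase (0 : Fin m → Fin 4), d (a, u)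
        = ∑ y, d (a, y)
      exact Finset.add_sum_erase _ (fun u => d (a, u)) (Finset.mem_univ 0)
    rw [Finset.sum_add_distrib] at h2
    rw [h1]
    rw [hIgI]
    linarith [h2]
  have hI0 : 0 ≤ I := by rw [hIgI]; exact Finset.sum_nonneg fun a _ => hgI0 a
  -- termwise bound
  have hterm : ∀ p q, ‖(χ - juntaMatrix k m χ) p q‖ ^ 2 ≤ d p * d q + e p * e q - f p * f q := by
    rintro ⟨a, z⟩ ⟨b, w⟩
    by_cases hz : z = 0
    · by_cases hw : w = 0
      · subst hz; subst hw
        have hE : (χ - juntaMatrix k m χ) (a, 0) (b, 0)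
            = -(∑ u ∈ Finset.univ.erase (0 : Fin m → Fin 4), χ (a, u) (b, u)) := by
          have hj : juntaMatrix k m χ (a, 0) (b, 0) = ∑ u, χ (a, u) (b, u) := by
            simp [juntaMatrix]
          rw [Matrix.sub_apply, hj,
            ← Finset.add_sum_erase _ (fun u => χ (a, u) (b, u)) (Finset.mem_univ 0)]
          ring
        rw [hE, norm_neg]
        have hb : ‖∑ u ∈ Finset.univ.erase (0 : Fin m → Fin 4), χ (a, u) (b, u)‖
            ≤ ∑ u ∈ Finset.univ.erase (0 : Fin m → Fin 4),
                Real.sqrt (d (a, u)) * Real.sqrt (d (b, u)) := by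
          refine (norm_sum_le _ _).trans (Finset.sum_le_sum fun u _ => ?_)
          have hk := psd_entry_sq hpsd (a, u) (b, u)
          have h2 : (Real.sqrt (d (a, u)) * Real.sqrt (d (b, u))) ^ 2 = d (a, u) * d (b, u) := by
            rw [mul_pow, Real.sq_sqrt (hd0 _), Real.sq_sqrt (hd0 _)]
          refine (pow_le_pow_iff_left₀ (norm_nonneg _)
            (mul_nonneg (Real.sqrt_nonneg _) (Real.sqrt_nonneg _)) two_ne_zero).mp ?_
          rw [h2]; exact hk
        have hsq : (∑ u ∈ Finset.univ.erase (0 : Fin m → Fin 4),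
              Real.sqrt (d (a, u)) * Real.sqrt (d (b, u))) ^ 2 ≤ gI a * gI b := by
          rw [hgI]
          exact Finset.sum_sq_le_sum_mul_sum_of_sq_eq_mul _
            (fun u _ => hd0 _) (fun u _ => hd0 _)
            (fun u _ => by rw [mul_pow, Real.sq_sqrt (hd0 _), Real.sq_sqrt (hd0 _)])
        have := (pow_le_pow_left₀ (norm_nonneg _) hb 2).trans hsq
        have heq : e (a, (0 : Fin m → Fin 4)) = gI a := by simp [he]
        have hfq : f (a, (0 : Fin m → Fin 4)) = d (a, 0) := by simp [hf]
        simp only [he, hf, if_pos rfl]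
        nlinarith [this]
      · have hE : (χ - juntaMatrix k m χ) (a, z) (b, w) = χ (a, z) (b, w) := by
          simp only [Matrix.sub_apply, juntaMatrix]
          rw [if_neg (by simp [hw])]
          ring
        rw [hE]
        have := psd_entry_sq hpsd (a, z) (b, w)
        simp only [he, hf, if_neg hw]
        simpa using this
    · have hE : (χ - juntaMatrix k m χ) (a, z) (b, w) = χ (a, z) (b, w) := by
        simp only [Matrix.sub_apply, juntaMatrix]
        rw [if_neg (by simp [hz])]
        ring
      rw [hE]
      have := psd_entry_sq hpsd (a, z) (b, w)
      simp only [he, hf, if_neg hz]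
      simpa using this
  -- total bound
  have hT : ∑ p, ∑ q, ‖(χ - juntaMatrix k m χ) p q‖ ^ 2 ≤ 2 * I := by
    calc ∑ p, ∑ q, ‖(χ - juntaMatrix k m χ) p q‖ ^ 2
        ≤ ∑ p, ∑ q, (d p * d q + e p * e q - f p * f q) :=
          Finset.sum_le_sum fun p _ => Finset.sum_le_sum fun q _ => hterm p q
      _ = (∑ p, d p) * (∑ q, d q) + (∑ p, e p) * (∑ q, e q)
            - (∑ p, f p) * (∑ q, f q) := by
          simp only [Finset.sum_add_distrib, Finset.sum_sub_distrib, ← Finset.mul_sum,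
            ← Finset.sum_mul]
      _ = 2 * I := by rw [htr', hSe, hSf]; ring
  have hfrob : frobNorm (χ - juntaMatrix k m χ) ≤ Real.sqrt (2 * I) := by
    exact Real.sqrt_le_sqrt hT
  have h2pos : (0:ℝ) < Real.sqrt 2 := Real.sqrt_pos.mpr (by norm_num)
  calc (1 / Real.sqrt 2) * frobNorm (χ - juntaMatrix k m χ)
      ≤ (1 / Real.sqrt 2) * Real.sqrt (2 * I) := by
        apply mul_le_mul_of_nonneg_left hfrob (by positivity)
    _ = Real.sqrt I := by
        rw [Real.sqrt_mul (by norm_num) I]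
        field_simp
    _ ≤ Real.sqrt I + Real.sqrt 2 / 2 * I := le_add_of_nonneg_right (by positivity)
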